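/- For every even integer d ≥ 2 and every natural number n, the exponential-generating-function coefficient identity holds: D_d(n)/n! = 2^{dn} · (∏_{k=1}^{d/2} (k - 1/2)_n) · (∏_{k=1}^{d/2} (k)_n) / (n! · ∏_{k=1}^{d} (k)_n); equivalently, the exponential generating function ∑_n D_d(n) z^n/n! is the generalized hypergeometric series _dF_d with upper parameters 1/2, 3/2, …, (d-1)/2, 1, 2, …, d/2, lower parameters 1, 2, …, d, and argument 2^d z. -/

import Mathlib

open Finset

/-- The generalized sequence `D_d(n)` for even `d`. -/
noncomputable def seqD (d n : ℕ) : ℝ :=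
  (∏ r ∈ Finset.range d, (r.factorial : ℝ) / ((n + r).factorial : ℝ)) *
    (∏ s ∈ Finset.range (d / 2), ((2 * n + 2 * s).factorial : ℝ) / ((2 * s).factorial : ℝ))

/-- Ascending factorial (Pochhammer symbol) `(a)_n = a (a+1) ⋯ (a+n-1)`. -/
noncomputable def ascFactorial (a : ℝ) (n : ℕ) : ℝ :=
  ∏ i ∈ Finset.range n, (a + i)

lemma asc_succ (a : ℝ) (n : ℕ) : ascFactorial a (n+1) = ascFactorial a n * (a + n) :=
  Finset.prod_range_succ _ _

lemma asc_pos (a : ℝ) (ha : 0 < a) (n : ℕ) : 0 < ascFactorial a n :=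
  Finset.prod_pos fun i _ => by positivity

lemma factA (r n : ℕ) : ((n + r).factorial : ℝ) = r.factorial * ascFactorial ((r:ℝ)+1) n := by
  induction n with
  | zero => simp [ascFactorial]
  | succ n ih =>
    have h : n + 1 + r = (n + r) + 1 := by omega
    rw [h, Nat.factorial_succ, asc_succ]
    push_cast
    rw [ih]; ring

lemma factB (s n : ℕ) : ((2*n + 2*s).factorial : ℝ) =
    (2*s).factorial * 2^(2*n) * ascFactorial ((s:ℝ)+1/2) n * ascFactorial ((s:ℝ)+1) n := by
  induction n with
  | zero => simp [ascFactorial]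
  | succ n ih =>
    have h : 2*(n+1) + 2*s = ((2*n + 2*s) + 1) + 1 := by omega
    rw [h, Nat.factorial_succ, Nat.factorial_succ, asc_succ, asc_succ]
    push_cast
    rw [ih]; ring

/-- The egf coefficients of `D_d(n)` are the coefficients of the hypergeometric series
`_dF_d` with upper parameters `1/2, 3/2, …, (d-1)/2, 1, 2, …, d/2`, lower parameters
`1, 2, …, d`, at argument `2^d z`. -/
theorem seqD_egf_coeff (d : ℕ) (hd : 2 ≤ d) (hdeven : Even d) (n : ℕ) :
    seqD d n / (n.factorial : ℝ) =
      (2 : ℝ) ^ (d * n) * (∏ k ∈ Finset.Icc 1 (d / 2), ascFactorial ((k : ℝ) - 1 / 2) n) *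
          (∏ k ∈ Finset.Icc 1 (d / 2), ascFactorial (k : ℝ) n) /
        ((n.factorial : ℝ) * ∏ k ∈ Finset.Icc 1 d, ascFactorial (k : ℝ) n) := by
  obtain ⟨m, hm⟩ := hdeven
  have hIcc : ∀ (e : ℕ) (f : ℕ → ℝ),
      ∏ k ∈ Finset.Icc 1 e, f k = ∏ i ∈ Finset.range e, f (1 + i) := by
    intro e f; rw [← Finset.Ico_add_one_right_eq_Icc, Finset.prod_Ico_eq_prod_range]; simp
  rw [hIcc, hIcc, hIcc]
  set R : ℝ := ∏ i ∈ Finset.range d, ascFactorial ((i:ℝ) + 1) n with hRdef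
  set P : ℝ := ∏ i ∈ Finset.range (d/2), ascFactorial ((i:ℝ) + 1/2) n with hPdef
  set Q : ℝ := ∏ i ∈ Finset.range (d/2), ascFactorial ((i:ℝ) + 1) n with hQdef
  have e1 : ∏ i ∈ Finset.range (d/2), ascFactorial (((1 + i : ℕ) : ℝ) - 1/2) n = P := by
    apply Finset.prod_congr rfl; intro i _; congr 1; push_cast; ring
  have e2 : ∏ i ∈ Finset.range (d/2), ascFactorial (((1 + i : ℕ) : ℝ)) n = Q := by
    apply Finset.prod_congr rfl; intro i _; congr 1; push_cast; ring
  have e3 : ∏ i ∈ Finset.range d, ascFactorial (((1 + i : ℕ) : ℝ)) n = R := by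
    apply Finset.prod_congr rfl; intro i _; congr 1; push_cast; ring
  rw [e1, e2, e3]
  have hL1 : (∏ r ∈ Finset.range d, (r.factorial : ℝ) / ((n + r).factorial : ℝ)) = R⁻¹ := by
    rw [← Finset.prod_inv_distrib]
    apply Finset.prod_congr rfl
    intro r _
    have hA : ascFactorial ((r:ℝ) + 1) n ≠ 0 := (asc_pos _ (by positivity) n).ne'
    have hF : (r.factorial : ℝ) ≠ 0 := Nat.cast_ne_zero.mpr r.factorial_ne_zero
    rw [factA]
    field_simp
  have hL2 : (∏ s ∈ Finset.range (d/2), ((2*n + 2*s).factorial : ℝ) / ((2*s).factorial : ℝ))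
      = 2 ^ (d * n) * P * Q := by
    have : ∀ s ∈ Finset.range (d/2), ((2*n + 2*s).factorial : ℝ) / ((2*s).factorial : ℝ)
        = 2^(2*n) * (ascFactorial ((s:ℝ) + 1/2) n * ascFactorial ((s:ℝ) + 1) n) := by
      intro s _
      have hF : ((2*s).factorial : ℝ) ≠ 0 := Nat.cast_ne_zero.mpr (2*s).factorial_ne_zero
      rw [factB]
      field_simp
    rw [Finset.prod_congr rfl this, Finset.prod_mul_distrib, Finset.prod_const,
      Finset.prod_mul_distrib, ← hPdef, ← hQdef, ← pow_mul, Finset.card_range]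
    have hd2 : d / 2 = m := by omega
    have : 2 * n * (d / 2) = d * n := by rw [hd2, hm]; ring
    rw [this]; ring
  unfold seqD
  rw [hL1, hL2]
  have hR : R ≠ 0 := by
    rw [hRdef]
    exact (Finset.prod_pos fun i _ => asc_pos _ (by positivity) n).ne'
  have hn : (n.factorial : ℝ) ≠ 0 := Nat.cast_ne_zero.mpr n.factorial_ne_zero
  field_simp
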